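/- arXiv:2107.08428 — 2 statements merged into one kernel-verified Lean document; each statement's English description precedes it below -/
import Mathlib

section
/- Let V be a locally finite tree and k ∈ ℕ. If V is k-stable, then the set {x ∈ V : f(x) = k} is the same for all mex labellings f of V, and is equal to the set of positions x of finite rank with 𝒢(x) = k. -/
open scoped Classical

universe u

/-- `PosP Γ n` is the set `Pₙ` of positions from which the second player can win
within `n` rounds: `P₀` is the set of terminal positions, and
`Pₙ₊₁ = {x : every option of x has an option in Pₙ}`. -/
def PosP {V : Type*} (Γ : V → Finset V) : ℕ → Set V
  | 0 => {x | Γ x = ∅}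
  | n + 1 => {x | ∀ y ∈ Γ x, ∃ z ∈ Γ y, z ∈ PosP Γ n}

/-- `PosN Γ n` is the set `Nₙ`: for `n ≥ 1`, `Nₙ = {x : some option of x lies in Pₙ₋₁}`. -/
def PosN {V : Type*} (Γ : V → Finset V) : ℕ → Set V
  | 0 => ∅
  | n + 1 => {x | ∃ y ∈ Γ x, y ∈ PosP Γ n}

/-- The P-positions `𝒫 = ⋃ₙ Pₙ` (second player wins). -/
def PPos {V : Type*} (Γ : V → Finset V) : Set V := ⋃ n, PosP Γ n

/-- The N-positions `𝒩 = ⋃ₙ Nₙ` (first player wins). -/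
def NPos {V : Type*} (Γ : V → Finset V) : Set V := ⋃ n, PosN Γ n

/-- The D-positions `𝒟 = V ∖ (𝒫 ∪ 𝒩)` (draws). -/
def DPos {V : Type*} (Γ : V → Finset V) : Set V := (PPos Γ ∪ NPos Γ)ᶜ

/-- The mex (least natural number not attained) of the values `g y`, `y ∈ s`. -/
noncomputable def mexF {V : Type*} (s : Finset V) (g : V → ℕ∞) : ℕ :=
  sInf {n : ℕ | ∀ y ∈ s, g y ≠ (n : ℕ∞)}

/-- The approximants `𝒢ₙ` of the extended Sprague-Grundy function. -/
noncomputable def Gfun {V : Type*} (Γ : V → Finset V) : ℕ → V → ℕ∞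
  | 0 => fun x => if Γ x = ∅ then 0 else ⊤
  | n + 1 => fun x =>
      let m := mexF (Γ x) (Gfun Γ n)
      if ∀ y ∈ Γ x, Gfun Γ n y ≤ (m : ℕ∞) ∨ ∃ z ∈ Γ y, Gfun Γ n z = (m : ℕ∞)
      then (m : ℕ∞) else ⊤

/-- `x` has finite rank with (finite) Sprague-Grundy value `m`:
`𝒢ₙ(x) = m` for all sufficiently large `n`. -/
def HasGVal {V : Type*} (Γ : V → Finset V) (x : V) (m : ℕ) : Prop :=
  ∃ n₀ : ℕ, ∀ n ≥ n₀, Gfun Γ n x = (m : ℕ∞)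

/-- `x` has infinite rank: `𝒢ₙ(x) = ∞` for all `n`. -/
def InfiniteRank {V : Type*} (Γ : V → Finset V) (x : V) : Prop :=
  ∀ n : ℕ, Gfun Γ n x = ⊤

/-- The rank of `x`: the least `n` with `𝒢ₙ(x) < ∞`, or `∞` if there is none. -/
noncomputable def rank {V : Type*} (Γ : V → Finset V) (x : V) : ℕ∞ :=
  sInf ((↑) '' {n : ℕ | Gfun Γ n x ≠ ⊤})

/-- For `x` of infinite rank, the set `𝒜` with `𝒢(x) = ∞(𝒜)`:
the set of finite Sprague-Grundy values of finite-rank options of `x`. -/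
def ValSet {V : Type*} (Γ : V → Finset V) (x : V) : Set ℕ :=
  {a | ∃ y ∈ Γ x, HasGVal Γ y a}

/-- The graph of the disjunctive sum: move in exactly one coordinate. -/
noncomputable def sumGraph {V W : Type*} (Γ : V → Finset V) (Δ : W → Finset W) :
    V × W → Finset (V × W) := fun p =>
  (Γ p.1).image (fun u => (u, p.2)) ∪ (Δ p.2).image (fun w => (p.1, w))

/-- Two (positions of possibly different) games lie in the same outcome class. -/
def SameOutcome {V W : Type*} (Γ : V → Finset V) (x : V) (Δ : W → Finset W) (y : W) : Prop :=
  (x ∈ PPos Γ ↔ y ∈ PPos Δ) ∧ (x ∈ NPos Γ ↔ y ∈ NPos Δ) ∧ (x ∈ DPos Γ ↔ y ∈ DPos Δ)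

/-- Equivalence of games: `G + X` and `H + X` have the same outcome for every
locally finite game `X`. -/
def GameEquiv {V W : Type*} (Γ : V → Finset V) (x : V) (Δ : W → Finset W) (y : W) : Prop :=
  ∀ (X : Type u) (Ξ : X → Finset X) (z : X),
    SameOutcome (sumGraph Γ Ξ) (x, z) (sumGraph Δ Ξ) (y, z)

/-- The nim heap `*m`: positions `0, …, m`, where from `k` one can move to any `j < k`. -/
def nimGraph (m : ℕ) : Fin (m + 1) → Finset (Fin (m + 1)) :=
  fun k => Finset.univ.filter (fun j => j < k)

/-- The reduced graph `R(V)`: the induced graph on the complement of the P-positions. -/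
noncomputable def reducedGraph {V : Type*} (Γ : V → Finset V) :
    {x : V // x ∉ PPos Γ} → Finset {x : V // x ∉ PPos Γ} := fun x =>
  (Γ x.1).subtype (fun y => y ∉ PPos Γ)

/-- The vertex set of `R^{(k)}(V)`: positions which do not have finite rank with
Sprague-Grundy value `< k`. -/
def RkSet {V : Type*} (Γ : V → Finset V) (k : ℕ) : Set V :=
  {x | ¬ ∃ m < k, HasGVal Γ x m}

/-- The induced game graph `R^{(k)}(V)` on `RkSet Γ k`. -/
noncomputable def RkGraph {V : Type*} (Γ : V → Finset V) (k : ℕ) :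
    RkSet Γ k → Finset (RkSet Γ k) := fun x =>
  (Γ x.1).subtype (fun y => y ∈ RkSet Γ k)

/-- `V` is `k`-stable: every infinite-rank position `x`, with `𝒢(x) = ∞(𝒜)`,
has `{0, 1, …, k} ⊆ 𝒜`. -/
def kStable {V : Type*} (Γ : V → Finset V) (k : ℕ) : Prop :=
  ∀ x, InfiniteRank Γ x → ∀ j ≤ k, j ∈ ValSet Γ x

/-- `l` is a directed walk from `o` to `x` in the graph `Γ`. -/
def IsWalk {V : Type*} (Γ : V → Finset V) (o x : V) (l : List V) : Prop :=
  l.head? = some o ∧ l.getLast? = some x ∧ l.Chain' (fun a b => b ∈ Γ a)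

/-- `Γ` is a tree with root `o`: `o` has no incoming arcs, and every vertex is
reached from `o` by a unique directed walk. -/
def IsTree {V : Type*} (Γ : V → Finset V) (o : V) : Prop :=
  (∀ x, o ∉ Γ x) ∧ ∀ x, ∃! l : List V, IsWalk Γ o x l

/-- `f` is a mex labelling: `f x` is the least natural number not attained by `f`
on the options of `x`, for every `x`. -/
def MexLabelling {V : Type*} (Γ : V → Finset V) (f : V → ℕ) : Prop :=
  ∀ x, f x = sInf {n : ℕ | ∀ y ∈ Γ x, f y ≠ n}

section Aux

variable {V : Type*} (Γ : V → Finset V)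

lemma mexF_notMem (s : Finset V) (g : V → ℕ∞) :
    ∀ y ∈ s, g y ≠ (mexF s g : ℕ∞) := by
  have hne : {n : ℕ | ∀ y ∈ s, g y ≠ (n : ℕ∞)}.Nonempty := by
    refine ⟨(s.sup fun y => (g y).toNat) + 1, fun y hy hc => ?_⟩
    have hle : (g y).toNat ≤ s.sup (fun y => (g y).toNat) := Finset.le_sup (f := fun y => (g y).toNat) hy
    rw [hc] at hle
    simp only [ENat.toNat_coe] at hle
    omega
  exact Nat.sInf_mem hne

lemma mexF_attained {s : Finset V} {g : V → ℕ∞} {i : ℕ} (h : i < mexF s g) :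
    ∃ y ∈ s, g y = (i : ℕ∞) := by
  by_contra hc
  push_neg at hc
  exact absurd (Nat.sInf_le (show i ∈ {n : ℕ | ∀ y ∈ s, g y ≠ (n : ℕ∞)} from hc)) (not_le.2 h)

lemma mexF_eq_of {s : Finset V} {g : V → ℕ∞} {m : ℕ}
    (hm : ∀ y ∈ s, g y ≠ (m : ℕ∞)) (hlt : ∀ i < m, ∃ y ∈ s, g y = (i : ℕ∞)) :
    mexF s g = m := by
  refine le_antisymm (Nat.sInf_le (show m ∈ {n : ℕ | ∀ y ∈ s, g y ≠ (n : ℕ∞)} from hm)) ?_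
  by_contra h
  push_neg at h
  obtain ⟨y, hy, hgy⟩ := hlt _ h
  exact mexF_notMem s g y hy hgy

lemma Gfun_zero (x : V) : Gfun Γ 0 x = if Γ x = ∅ then 0 else ⊤ := rfl

lemma Gfun_succ (n : ℕ) (x : V) :
    Gfun Γ (n + 1) x =
      if (∀ y ∈ Γ x, Gfun Γ n y ≤ (mexF (Γ x) (Gfun Γ n) : ℕ∞) ∨
          ∃ z ∈ Γ y, Gfun Γ n z = (mexF (Γ x) (Gfun Γ n) : ℕ∞))
      then (mexF (Γ x) (Gfun Γ n) : ℕ∞) else ⊤ := rfl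

lemma Gfun_succ_eq_iff {n : ℕ} {x : V} {m : ℕ} :
    Gfun Γ (n + 1) x = (m : ℕ∞) ↔
      mexF (Γ x) (Gfun Γ n) = m ∧
      ∀ y ∈ Γ x, Gfun Γ n y ≤ (m : ℕ∞) ∨ ∃ z ∈ Γ y, Gfun Γ n z = (m : ℕ∞) := by
  rw [Gfun_succ]
  split_ifs with h
  · constructor
    · intro he
      have hmm : mexF (Γ x) (Gfun Γ n) = m := by exact_mod_cast he
      exact ⟨hmm, hmm ▸ h⟩
    · rintro ⟨h1, _⟩
      exact_mod_cast congrArg (fun t : ℕ => (t : ℕ∞)) h1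
  · constructor
    · intro he
      exact absurd he (by simp)
    · rintro ⟨h1, h2⟩
      exact absurd (h1 ▸ h2) h

lemma le_coe_exists {a : ℕ∞} {m : ℕ} (h : a ≤ (m : ℕ∞)) :
    ∃ i : ℕ, i ≤ m ∧ a = (i : ℕ∞) := by
  lift a to ℕ using (h.trans_lt (WithTop.coe_lt_top m)).ne
  exact ⟨a, by exact_mod_cast h, rfl⟩

lemma Gfun_succ_of_eq : ∀ {n : ℕ} {x : V} {m : ℕ},
    Gfun Γ n x = (m : ℕ∞) → Gfun Γ (n + 1) x = (m : ℕ∞) := by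
  intro n
  induction n with
  | zero =>
    intro x m h
    rw [Gfun_zero] at h
    split_ifs at h with hx
    · have hm0 : m = 0 := by exact_mod_cast h.symm
      subst hm0
      rw [Gfun_succ_eq_iff]
      constructor
      · refine le_antisymm (Nat.sInf_le ?_) (Nat.zero_le _)
        intro y hy
        rw [hx] at hy
        exact absurd hy (Finset.notMem_empty y)
      · intro y hy
        rw [hx] at hy
        exact absurd hy (Finset.notMem_empty y)
    · exact absurd h (by simp)
  | succ n IH =>
    intro x m h
    rw [Gfun_succ_eq_iff] at h
    obtain ⟨hmex, hcond⟩ := h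
    rw [Gfun_succ_eq_iff]
    constructor
    · apply mexF_eq_of
      · intro y hy hey
        rcases hcond y hy with hle | ⟨z, hz, hgz⟩
        · obtain ⟨i, him, hi⟩ := le_coe_exists hle
          have : Gfun Γ (n + 1) y = (i : ℕ∞) := IH hi
          rw [this] at hey
          have : i = m := by exact_mod_cast hey
          subst this
          exact mexF_notMem (Γ x) (Gfun Γ n) y hy (by rw [hi, hmex])
        · rw [Gfun_succ_eq_iff] at hey
          have := mexF_notMem (Γ y) (Gfun Γ n) z hz
          rw [hey.1] at this
          exact this hgz
      · intro i hi
        obtain ⟨y, hy, hgy⟩ := mexF_attained (s := Γ x) (g := Gfun Γ n) (hmex ▸ hi)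
        exact ⟨y, hy, IH hgy⟩
    · intro y hy
      rcases hcond y hy with hle | ⟨z, hz, hgz⟩
      · obtain ⟨i, him, hi⟩ := le_coe_exists hle
        left
        rw [IH hi]
        exact_mod_cast him
      · exact Or.inr ⟨z, hz, IH hgz⟩

lemma Gfun_stable {n : ℕ} {x : V} {m : ℕ} (h : Gfun Γ n x = (m : ℕ∞)) :
    ∀ p, n ≤ p → Gfun Γ p x = (m : ℕ∞) := by
  intro p hp
  induction p with
  | zero =>
    have : n = 0 := Nat.le_zero.mp hp
    exact this ▸ h
  | succ p IH =>
    rcases Nat.lt_or_ge n (p + 1) with h1 | h1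
    · exact Gfun_succ_of_eq Γ (IH (Nat.lt_succ_iff.mp h1))
    · have : n = p + 1 := le_antisymm hp h1
      exact this ▸ h

lemma hasGVal_iff {x : V} {m : ℕ} :
    HasGVal Γ x m ↔ ∃ n, Gfun Γ n x = (m : ℕ∞) := by
  constructor
  · rintro ⟨n₀, h⟩
    exact ⟨n₀, h n₀ le_rfl⟩
  · rintro ⟨n, h⟩
    exact ⟨n, fun p hp => Gfun_stable Γ h p hp⟩

lemma hasGVal_unique {x : V} {m m' : ℕ} (h : HasGVal Γ x m) (h' : HasGVal Γ x m') :
    m = m' := by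
  obtain ⟨n, hn⟩ := h
  obtain ⟨n', hn'⟩ := h'
  have e1 := hn (max n n') (le_max_left _ _)
  have e2 := hn' (max n n') (le_max_right _ _)
  rw [e1] at e2
  exact_mod_cast e2

lemma not_infiniteRank_iff {x : V} :
    ¬ InfiniteRank Γ x ↔ ∃ m, HasGVal Γ x m := by
  constructor
  · intro h
    rw [InfiniteRank] at h
    push_neg at h
    obtain ⟨n, hn⟩ := h
    obtain ⟨m, hm⟩ := WithTop.ne_top_iff_exists.mp hn
    exact ⟨m, (hasGVal_iff Γ).mpr ⟨n, hm.symm⟩⟩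
  · rintro ⟨m, hm⟩ hinf
    obtain ⟨n, hn⟩ := (hasGVal_iff Γ).mp hm
    rw [hinf n] at hn
    exact absurd hn (by simp)

lemma hasGVal_struct {x : V} {m : ℕ} (h : HasGVal Γ x m) :
    (∀ i < m, ∃ y ∈ Γ x, HasGVal Γ y i) ∧
    (∀ y ∈ Γ x, ¬ HasGVal Γ y m) ∧
    (∀ y ∈ Γ x, (∃ i < m, HasGVal Γ y i) ∨ ∃ z ∈ Γ y, HasGVal Γ z m) := by
  obtain ⟨n₀, hn₀⟩ := h
  have hx : Gfun Γ (n₀ + 1) x = (m : ℕ∞) := hn₀ (n₀ + 1) (Nat.le_succ _)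
  rw [Gfun_succ_eq_iff] at hx
  obtain ⟨hmex, hcond⟩ := hx
  have hb : ∀ y ∈ Γ x, ¬ HasGVal Γ y m := by
    intro y hy hv
    obtain ⟨p, hp⟩ := (hasGVal_iff Γ).mp hv
    set N := max p n₀ with hN
    have hyN : Gfun Γ N y = (m : ℕ∞) := Gfun_stable Γ hp N (le_max_left _ _)
    have hxN : Gfun Γ (N + 1) x = (m : ℕ∞) :=
      hn₀ (N + 1) (le_trans (le_max_right p n₀) (Nat.le_succ _))
    rw [Gfun_succ_eq_iff] at hxN
    have := mexF_notMem (Γ x) (Gfun Γ N) y hy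
    rw [hxN.1] at this
    exact this hyN
  refine ⟨?_, hb, ?_⟩
  · intro i hi
    obtain ⟨y, hy, hgy⟩ := mexF_attained (s := Γ x) (g := Gfun Γ n₀) (hmex ▸ hi)
    exact ⟨y, hy, (hasGVal_iff Γ).mpr ⟨n₀, hgy⟩⟩
  · intro y hy
    rcases hcond y hy with hle | ⟨z, hz, hgz⟩
    · obtain ⟨i, him, hi⟩ := le_coe_exists hle
      have hvy : HasGVal Γ y i := (hasGVal_iff Γ).mpr ⟨n₀, hi⟩
      have : i ≠ m := fun he => hb y hy (he ▸ hvy)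
      exact Or.inl ⟨i, lt_of_le_of_ne him this, hvy⟩
    · exact Or.inr ⟨z, hz, (hasGVal_iff Γ).mpr ⟨n₀, hgz⟩⟩

lemma finset_exists_uniform {α : Type*} (s : Finset α) (P : ℕ → α → Prop)
    (hP : ∀ a ∈ s, ∃ n, ∀ p ≥ n, P p a) : ∃ N, ∀ a ∈ s, P N a := by
  classical
  choose! g hg using hP
  exact ⟨s.sup g, fun a ha => hg a ha _ (Finset.le_sup ha)⟩

lemma hasGVal_of {x : V} {m : ℕ}
    (h1 : ∀ i < m, ∃ y ∈ Γ x, HasGVal Γ y i)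
    (h2 : ∀ y ∈ Γ x, ¬ HasGVal Γ y m)
    (h3 : ∀ y ∈ Γ x, (∃ i < m, HasGVal Γ y i) ∨ ∃ z ∈ Γ y, HasGVal Γ z m) :
    HasGVal Γ x m := by
  obtain ⟨N1, hN1⟩ := finset_exists_uniform (Finset.range m)
      (fun n i => ∃ y ∈ Γ x, Gfun Γ n y = (i : ℕ∞)) (by
    intro i hi
    obtain ⟨y, hy, hv⟩ := h1 i (Finset.mem_range.mp hi)
    obtain ⟨n₀, hn₀⟩ := hv
    exact ⟨n₀, fun p hp => ⟨y, hy, hn₀ p hp⟩⟩)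
  obtain ⟨N2, hN2⟩ := finset_exists_uniform (Γ x)
      (fun n y => Gfun Γ n y ≤ (m : ℕ∞) ∨ ∃ z ∈ Γ y, Gfun Γ n z = (m : ℕ∞)) (by
    intro y hy
    rcases h3 y hy with ⟨i, him, hv⟩ | ⟨z, hz, hv⟩
    · obtain ⟨n₀, hn₀⟩ := hv
      exact ⟨n₀, fun p hp => Or.inl (by rw [hn₀ p hp]; exact_mod_cast him.le)⟩
    · obtain ⟨n₀, hn₀⟩ := hv
      exact ⟨n₀, fun p hp => Or.inr ⟨z, hz, hn₀ p hp⟩⟩)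
  set N := max N1 N2 with hNdef
  have key : Gfun Γ (N + 1) x = (m : ℕ∞) := by
    rw [Gfun_succ_eq_iff]
    constructor
    · apply mexF_eq_of
      · intro y hy hey
        exact h2 y hy ((hasGVal_iff Γ).mpr ⟨N, hey⟩)
      · intro i hi
        obtain ⟨y, hy, hgy⟩ := hN1 i (Finset.mem_range.mpr hi)
        exact ⟨y, hy, Gfun_stable Γ hgy N (le_max_left _ _)⟩
    · intro y hy
      rcases hN2 y hy with hle | ⟨z, hz, hgz⟩
      · obtain ⟨i, him, hi⟩ := le_coe_exists hle
        left
        rw [Gfun_stable Γ hi N (le_max_right _ _)]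
        exact_mod_cast him
      · exact Or.inr ⟨z, hz, Gfun_stable Γ hgz N (le_max_right _ _)⟩
  exact (hasGVal_iff Γ).mpr ⟨N + 1, key⟩

lemma mexLabel_spec {f : V → ℕ} (hf : MexLabelling Γ f) (x : V) :
    (∀ y ∈ Γ x, f y ≠ f x) ∧ ∀ i < f x, ∃ y ∈ Γ x, f y = i := by
  have hne : {n : ℕ | ∀ y ∈ Γ x, f y ≠ n}.Nonempty := by
    refine ⟨(Γ x).sup f + 1, fun y hy hc => ?_⟩
    have := Finset.le_sup (f := f) hy
    omega
  constructor
  · have := Nat.sInf_mem hne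
    rw [← hf x] at this
    exact this
  · intro i hi
    by_contra hc
    push_neg at hc
    have : sInf {n : ℕ | ∀ y ∈ Γ x, f y ≠ n} ≤ i := Nat.sInf_le (show i ∈ {n : ℕ | ∀ y ∈ Γ x, f y ≠ n} from hc)
    rw [← hf x] at this
    omega

lemma mexLabel_eq {f : V → ℕ} (hf : MexLabelling Γ f) (x : V) {m : ℕ}
    (hm : ∀ y ∈ Γ x, f y ≠ m) (hlt : ∀ i < m, ∃ y ∈ Γ x, f y = i) : f x = m := by
  rcases lt_trichotomy (f x) m with h | h | h
  · obtain ⟨y, hy, hfy⟩ := hlt _ h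
    exact absurd hfy ((mexLabel_spec Γ hf x).1 y hy)
  · exact h
  · obtain ⟨y, hy, hfy⟩ := (mexLabel_spec Γ hf x).2 m h
    exact absurd hfy (hm y hy)

end Aux

/-- if the locally finite tree `V` is `k`-stable, then for every
mex labelling `f` the set `{x : f x = k}` equals the set of finite-rank
positions with `𝒢(x) = k` (hence is the same for all mex labellings). -/
theorem stmt14 {V : Type*} (Γ : V → Finset V) (o : V) (ht : IsTree Γ o) (k : ℕ)
    (hs : kStable Γ k) (f : V → ℕ) (hf : MexLabelling Γ f) :
    {x : V | f x = k} = {x : V | HasGVal Γ x k} := by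
  have main : ∀ j, j ≤ k → ∀ x, (f x = j ↔ HasGVal Γ x j) := by
    intro j
    induction j using Nat.strong_induction_on with
    | _ j IH =>
      intro hjk
      -- Direction 1: 𝒢ₙ(x) = j implies f x = j, by induction on n.
      have dir1 : ∀ n, ∀ x : V, Gfun Γ n x = (j : ℕ∞) → f x = j := by
        intro n
        induction n with
        | zero =>
          intro x h
          rw [Gfun_zero] at h
          split_ifs at h with hx
          · have hj0 : j = 0 := by exact_mod_cast h.symm
            subst hj0
            apply mexLabel_eq Γ hf x
            · intro y hy
              rw [hx] at hy
              exact absurd hy (Finset.notMem_empty y)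
            · intro i hi
              omega
          · exact absurd h (by simp)
        | succ n IHn =>
          intro x h
          have hxval : HasGVal Γ x j := (hasGVal_iff Γ).mpr ⟨n + 1, h⟩
          rw [Gfun_succ_eq_iff] at h
          obtain ⟨hmex, hcond⟩ := h
          apply mexLabel_eq Γ hf x
          · -- no option of x has f-value j
            intro y hy hfy
            have hyj : ¬ HasGVal Γ y j := (hasGVal_struct Γ hxval).2.1 y hy
            rcases hcond y hy with hle | ⟨z, hz, hgz⟩
            · obtain ⟨i, him, hi⟩ := le_coe_exists hle
              have hvi : HasGVal Γ y i := (hasGVal_iff Γ).mpr ⟨n, hi⟩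
              have hij : i ≠ j := fun he => hyj (he ▸ hvi)
              have : f y = i := ((IH i (lt_of_le_of_ne him hij)
                (le_trans (le_of_lt (lt_of_le_of_ne him hij)) hjk) y).mpr hvi)
              omega
            · have hfz : f z = j := IHn z hgz
              have := (mexLabel_spec Γ hf y).1 z hz
              omega
          · -- every i < j is attained by f on options of x
            intro i hi
            obtain ⟨y, hy, hgy⟩ := mexF_attained (s := Γ x) (g := Gfun Γ n) (hmex ▸ hi)
            have hvi : HasGVal Γ y i := (hasGVal_iff Γ).mpr ⟨n, hgy⟩
            exact ⟨y, hy, (IH i hi (le_trans hi.le hjk) y).mpr hvi⟩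
      -- Direction 2: f x = j implies HasGVal x j (needs k-stability).
      have dir2 : ∀ x : V, f x = j → HasGVal Γ x j := by
        intro x hfx
        obtain ⟨hs1, hs2⟩ := mexLabel_spec Γ hf x
        rw [hfx] at hs1 hs2
        apply hasGVal_of Γ
        · intro i hi
          obtain ⟨y, hy, hfy⟩ := hs2 i hi
          exact ⟨y, hy, (IH i hi (le_trans hi.le hjk) y).mp hfy⟩
        · intro y hy hv
          obtain ⟨n, hn⟩ := (hasGVal_iff Γ).mp hv
          exact hs1 y hy (dir1 n y hn)
        · intro y hy
          by_cases hinf : InfiniteRank Γ y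
          · obtain ⟨z, hz, hval⟩ := hs y hinf j hjk
            exact Or.inr ⟨z, hz, hval⟩
          · obtain ⟨m, hm⟩ := (not_infiniteRank_iff Γ).mp hinf
            rcases lt_trichotomy m j with h | h | h
            · exact Or.inl ⟨m, h, hm⟩
            · subst h
              obtain ⟨n, hn⟩ := (hasGVal_iff Γ).mp hm
              exact absurd (dir1 n y hn) (hs1 y hy)
            · obtain ⟨z, hz, hval⟩ := (hasGVal_struct Γ hm).1 j h
              exact Or.inr ⟨z, hz, hval⟩
      intro x
      constructor
      · exact dir2 x
      · intro hv
        obtain ⟨n, hn⟩ := (hasGVal_iff Γ).mp hv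
        exact dir1 n x hn
  ext x
  simp only [Set.mem_setOf_eq]
  exact main k le_rfl x
end

section
/- For p ∈ (0,1), let φ_p(s) = (1−p) + p s⁴ and h_p(s) = 1 − φ_p(1 − φ_p(s)) for s ∈ [0,1]. Then h_p has a unique fixed point in [0,1] if and only if p ≤ 5^{3/4}/4. -/
open Set Filter Topology

set_option maxHeartbeats 2000000 in
/-- for `p ∈ (0,1)`, with `φ_p(s) = (1−p) + p s⁴` and
`h_p(s) = 1 − φ_p(1 − φ_p(s))`, the map `h_p` has a unique fixed point in
`[0,1]` if and only if `p ≤ 5^{3/4}/4`. -/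
theorem stmt19 (p : ℝ) (hp0 : 0 < p) (hp1 : p < 1)
    (φ : ℝ → ℝ) (hφ : ∀ s : ℝ, φ s = (1 - p) + p * s ^ 4)
    (h : ℝ → ℝ) (hh : ∀ s : ℝ, h s = 1 - φ (1 - φ s)) :
    (∃! s : ℝ, s ∈ Set.Icc (0 : ℝ) 1 ∧ h s = s) ↔
      p ≤ (5 : ℝ) ^ ((3 : ℝ) / 4) / 4 := by
  set c : ℝ := (5:ℝ) ^ ((-1:ℝ)/4) with hc_def
  have hc_pos : 0 < c := Real.rpow_pos_of_pos (by norm_num) _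
  have hc4 : c^4 = 1/5 := by
    rw [hc_def, ← Real.rpow_natCast ((5:ℝ) ^ ((-1:ℝ)/4)) 4, ← Real.rpow_mul (by norm_num)]
    norm_num
  have h53 : (5:ℝ) ^ ((3:ℝ)/4) * c^3 = 1 := by
    rw [hc_def, ← Real.rpow_natCast ((5:ℝ) ^ ((-1:ℝ)/4)) 3, ← Real.rpow_mul (by norm_num),
      ← Real.rpow_add (by norm_num)]
    norm_num
  have hc3 : (0:ℝ) < c^3 := by positivity
  have h5pos : (0:ℝ) < (5:ℝ) ^ ((3:ℝ)/4) := Real.rpow_pos_of_pos (by norm_num) _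
  have hpc : (p ≤ (5:ℝ) ^ ((3:ℝ)/4) / 4) ↔ 4*p*c^3 ≤ 1 := by
    constructor
    · intro hle
      nlinarith [mul_le_mul_of_nonneg_right hle hc3.le]
    · intro hle
      nlinarith [mul_le_mul_of_nonneg_left hle h5pos.le]
  rw [hpc]
  have hH : ∀ s : ℝ, h s = p - p * (p - p*s^4)^4 := by
    intro s; rw [hh, hφ, hφ]; ring
  set g : ℝ → ℝ := fun s => (p - p*(p - p*s^4)^4) - s with hg_def
  have hfix : ∀ s, (h s = s) ↔ g s = 0 := by
    intro s
    rw [hH s, hg_def]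
    exact sub_eq_zero.symm
  have hder : ∀ x : ℝ, HasDerivAt g (16*p^2*x^3*(p - p*x^4)^3 - 1) x := by
    intro x
    have h1 : HasDerivAt (fun s : ℝ => p - p*s^4) (-(p*((4:ℕ)*x^3))) x := by
      simpa using (((hasDerivAt_pow 4 x).const_mul p).const_sub p)
    have h2 := (((h1.pow 4).const_mul p).const_sub p).sub (hasDerivAt_id x)
    refine h2.congr_deriv ?_
    push_cast
    ring
  have hgc : Continuous g := by
    rw [continuous_iff_continuousAt]
    exact fun x => (hder x).differentiableAt.continuousAt
  have hg0 : 0 < g 0 := by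
    have : g 0 = p - p*p^4 := by rw [hg_def]; norm_num
    rw [this]
    nlinarith [pow_lt_one₀ hp0.le hp1 (by norm_num : (4:ℕ) ≠ 0)]
  have hg1 : g 1 < 0 := by
    have : g 1 = p - 1 := by rw [hg_def]; ring_nf
    rw [this]; linarith
  -- key pointwise inequalities
  have hmle : ∀ x : ℝ, 0 ≤ x → x*(1-x^4) ≤ 4*c/5 := by
    intro x hx
    have hfact : 4*c/5 - x*(1-x^4) = (x - c)^2 * (x^3 + 2*c*x^2 + 3*c^2*x + 4*c^3) := by
      linear_combination ((4*c - 5*x)/5 + 6*x - 24*c/5) * hc4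
    have hq : 0 ≤ x^3 + 2*c*x^2 + 3*c^2*x + 4*c^3 := by
      have h1 : 0 ≤ x^3 := pow_nonneg hx 3
      have h2 : 0 ≤ 2*c*x^2 := by positivity
      have h3 : 0 ≤ 3*c^2*x := by positivity
      have h4 : 0 ≤ 4*c^3 := by positivity
      linarith
    nlinarith [mul_nonneg (sq_nonneg (x-c)) hq]
  have hmlt : ∀ x : ℝ, 0 ≤ x → x ≠ c → x*(1-x^4) < 4*c/5 := by
    intro x hx hxc
    have hfact : 4*c/5 - x*(1-x^4) = (x - c)^2 * (x^3 + 2*c*x^2 + 3*c^2*x + 4*c^3) := by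
      linear_combination ((4*c - 5*x)/5 + 6*x - 24*c/5) * hc4
    have hq : 0 < x^3 + 2*c*x^2 + 3*c^2*x + 4*c^3 := by
      have h1 : 0 ≤ x^3 := pow_nonneg hx 3
      have h2 : 0 ≤ 2*c*x^2 := by positivity
      have h3 : 0 ≤ 3*c^2*x := by positivity
      have h4 : 0 < 4*c^3 := by positivity
      linarith
    have hne : x - c ≠ 0 := sub_ne_zero.mpr hxc
    have hsq : 0 < (x-c)^2 := by positivity
    nlinarith [mul_pos hsq hq]
  have h45 : 4*p*c^3 ≤ 1 → 16*p^5*(4*c/5)^3 ≤ 1 := by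
    intro hle
    have h1 : (4*p*c^3)^5 ≤ 1 := by
      calc (4*p*c^3)^5 ≤ 1^5 := pow_le_pow_left₀ (by positivity) hle 5
        _ = 1 := one_pow 5
    have e1 : (4*p*c^3)^5 = 1024*p^5*(c^3*(c^4)^3) := by ring
    rw [e1, hc4] at h1
    nlinarith [h1]
  have hkey_le : ∀ x : ℝ, x ∈ Icc (0:ℝ) 1 → 4*p*c^3 ≤ 1 →
      16*p^2*x^3*(p - p*x^4)^3 ≤ 1 := by
    intro x hx hle
    have hE : 16*p^2*x^3*(p - p*x^4)^3 = 16*p^5*(x*(1-x^4))^3 := by ring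
    rw [hE]
    rcases le_or_gt (x*(1-x^4)) 0 with hm0 | hm0
    · have hm3 : (x*(1-x^4))^3 ≤ 0 := Odd.pow_nonpos (by decide) hm0
      nlinarith [pow_pos hp0 5]
    · have hcube : (x*(1-x^4))^3 ≤ (4*c/5)^3 :=
        pow_le_pow_left₀ hm0.le (hmle x hx.1) 3
      have := h45 hle
      nlinarith [pow_pos hp0 5]
  have hkey_lt : ∀ x : ℝ, x ∈ Icc (0:ℝ) 1 → 4*p*c^3 ≤ 1 → x ≠ c →
      16*p^2*x^3*(p - p*x^4)^3 < 1 := by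
    intro x hx hle hxc
    have hE : 16*p^2*x^3*(p - p*x^4)^3 = 16*p^5*(x*(1-x^4))^3 := by ring
    rw [hE]
    rcases le_or_gt (x*(1-x^4)) 0 with hm0 | hm0
    · have hm3 : (x*(1-x^4))^3 ≤ 0 := Odd.pow_nonpos (by decide) hm0
      nlinarith [pow_pos hp0 5]
    · have hcube : (x*(1-x^4))^3 < (4*c/5)^3 :=
        pow_lt_pow_left₀ (hmlt x hx.1 hxc) hm0.le (by norm_num)
      have := h45 hle
      nlinarith [pow_pos hp0 5]
  constructor
  · -- uniqueness of fixed point ⇒ p ≤ threshold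
    intro hEU
    by_contra hgt
    push_neg at hgt
    -- fixed point of F
    obtain ⟨s', hsmem, hsfix⟩ : ∃ s ∈ Icc (0:ℝ) 1, p - p*s^4 = s := by
      have hcF : ContinuousOn (fun s : ℝ => p - p*s^4 - s) (Icc 0 1) := by fun_prop
      have hmem : (0:ℝ) ∈ Icc ((fun s : ℝ => p - p*s^4 - s) 1) ((fun s : ℝ => p - p*s^4 - s) 0) := by
        simp only
        norm_num
        linarith
      obtain ⟨s, hs, hgs⟩ := intermediate_value_Icc' (by norm_num : (0:ℝ) ≤ 1) hcF hmem
      exact ⟨s, hs, by simp only at hgs; linarith [hgs]⟩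
    have hs0 : 0 < s' := by
      rcases lt_or_eq_of_le hsmem.1 with h' | h'
      · exact h'
      · exfalso; rw [← h'] at hsfix; norm_num at hsfix; linarith
    have hs1 : s' < 1 := by nlinarith [pow_nonneg hsmem.1 4]
    have hgs : g s' = 0 := by
      rw [hg_def]
      simp only
      rw [hsfix, hsfix, sub_self]
    have hkey : 1 < 4*p*s'^3 := by
      by_contra hle'
      push_neg at hle'
      have hsc : s' < c := by
        have h3 : s'^3 < c^3 := by nlinarith
        exact lt_of_pow_lt_pow_left₀ 3 hc_pos.le h3
      have h4 : 0 < 1 - s'^4 := by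
        have := pow_lt_one₀ hsmem.1 hs1 (by norm_num : (4:ℕ) ≠ 0)
        linarith
      have h5 : 1 - s'^4 < 4*c^3*s' := by nlinarith
      nlinarith [pow_nonneg hsmem.1 2, pow_nonneg hsmem.1 3, hsmem.1]
    have hD : HasDerivAt g ((4*p*s'^3)^2 - 1) s' := by
      have e : 16*p^2*s'^3*(p - p*s'^4)^3 - 1 = (4*p*s'^3)^2 - 1 := by
        rw [hsfix]; ring
      rw [← e]
      exact hder s'
    have hDpos : 0 < (4*p*s'^3)^2 - 1 := by nlinarith
    have hslope := hasDerivAt_iff_tendsto_slope.mp hD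
    have hev : ∀ᶠ y in 𝓝[≠] s', 0 < slope g s' y :=
      hslope.eventually (eventually_gt_nhds hDpos)
    have hmono : 𝓝[<] s' ≤ 𝓝[≠] s' :=
      nhdsWithin_mono _ (fun y hy => ne_of_lt hy)
    have hev2 : ∀ᶠ y in 𝓝[<] s', 0 < slope g s' y := hev.filter_mono hmono
    have hev3 : ∀ᶠ y in 𝓝[<] s', 0 < y :=
      (eventually_gt_nhds hs0).filter_mono nhdsWithin_le_nhds
    have hev4 : ∀ᶠ y in 𝓝[<] s', y < s' :=
      eventually_mem_nhdsWithin.mono (fun y hy => hy)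
    obtain ⟨y, ⟨hyslope, hy0⟩, hy3⟩ := ((hev2.and hev3).and hev4).exists
    have hgy : g y < 0 := by
      have hs : slope g s' y = g y / (y - s') := by
        rw [slope_def_field, hgs]
        ring_nf
      rw [hs] at hyslope
      rcases div_pos_iff.mp hyslope with ⟨h1, h2⟩ | ⟨h1, h2⟩
      · linarith
      · linarith
    obtain ⟨t, ht, hgt0⟩ : ∃ t ∈ Icc (0:ℝ) y, g t = 0 := by
      have hmem : (0:ℝ) ∈ Icc (g y) (g 0) := ⟨hgy.le, hg0.le⟩
      obtain ⟨t, ht, h'⟩ := intermediate_value_Icc' hy0.le hgc.continuousOn hmem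
      exact ⟨t, ht, h'⟩
    obtain ⟨u, _, huniq⟩ := hEU
    have ht01 : t ∈ Icc (0:ℝ) 1 := ⟨ht.1, by linarith [ht.2, hy3, hsmem.2]⟩
    have h1 := huniq t ⟨ht01, (hfix t).2 hgt0⟩
    have h2 := huniq s' ⟨hsmem, (hfix s').2 hgs⟩
    have ht_eq : t = s' := h1.trans h2.symm
    rw [ht_eq] at ht
    linarith [ht.2]
  · -- p ≤ threshold ⇒ unique fixed point
    intro hle
    obtain ⟨s₀, hs₀mem, hs₀⟩ : ∃ s ∈ Icc (0:ℝ) 1, g s = 0 := by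
      have hmem : (0:ℝ) ∈ Icc (g 1) (g 0) := ⟨hg1.le, hg0.le⟩
      obtain ⟨s, hs, hgs⟩ := intermediate_value_Icc' (by norm_num : (0:ℝ) ≤ 1)
        hgc.continuousOn hmem
      exact ⟨s, hs, hgs⟩
    refine ⟨s₀, ⟨hs₀mem, (hfix s₀).2 hs₀⟩, ?_⟩
    rintro b ⟨hbmem, hbfix⟩
    by_contra hne
    have hb0 : g b = 0 := (hfix b).1 hbfix
    set a := min b s₀ with ha_def
    set b' := max b s₀ with hb'_def
    have hab : a < b' := min_lt_max.2 hne
    have ha0 : g a = 0 := by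
      rcases le_total b s₀ with h' | h'
      · rw [ha_def, min_eq_left h']; exact hb0
      · rw [ha_def, min_eq_right h']; exact hs₀
    have hb'0 : g b' = 0 := by
      rcases le_total b s₀ with h' | h'
      · rw [hb'_def, max_eq_right h']; exact hs₀
      · rw [hb'_def, max_eq_left h']; exact hb0
    have hmem_a : a ∈ Icc (0:ℝ) 1 := by
      rcases le_total b s₀ with h' | h'
      · rw [ha_def, min_eq_left h']; exact hbmem
      · rw [ha_def, min_eq_right h']; exact hs₀mem
    have hmem_b' : b' ∈ Icc (0:ℝ) 1 := by
      rcases le_total b s₀ with h' | h'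
      · rw [hb'_def, max_eq_right h']; exact hs₀mem
      · rw [hb'_def, max_eq_left h']; exact hbmem
    have hanti : AntitoneOn g (Icc (0:ℝ) 1) := by
      apply antitoneOn_of_deriv_nonpos (convex_Icc 0 1) hgc.continuousOn
      · intro x _
        exact (hder x).differentiableAt.differentiableWithinAt
      · intro x hx
        rw [(hder x).deriv]
        have hx' : x ∈ Icc (0:ℝ) 1 := interior_subset hx
        linarith [hkey_le x hx' hle]
    have hconst : ∀ s ∈ Icc a b', g s = 0 := by
      intro s hs
      have hs01 : s ∈ Icc (0:ℝ) 1 := ⟨le_trans hmem_a.1 hs.1, le_trans hs.2 hmem_b'.2⟩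
      have h1 := hanti hmem_a hs01 hs.1
      have h2 := hanti hs01 hmem_b' hs.2
      linarith
    obtain ⟨s₁, hs₁, hs₁c⟩ : ∃ s₁, s₁ ∈ Ioo a b' ∧ s₁ ≠ c := by
      by_cases hc1 : (a + b')/2 = c
      · refine ⟨(3*a + b')/4, ⟨by linarith, by linarith⟩, ?_⟩
        intro hEq
        rw [← hc1] at hEq
        have : a = b' := by linarith
        exact absurd this (ne_of_lt hab)
      · exact ⟨(a + b')/2, ⟨by linarith, by linarith⟩, hc1⟩
    have hevc : g =ᶠ[nhds s₁] (fun _ => (0:ℝ)) := by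
      filter_upwards [Ioo_mem_nhds hs₁.1 hs₁.2] with z hz
      exact hconst z ⟨hz.1.le, hz.2.le⟩
    have hd0 : deriv g s₁ = 0 := by
      rw [hevc.deriv_eq]
      exact deriv_const s₁ 0
    have hs₁01 : s₁ ∈ Icc (0:ℝ) 1 :=
      ⟨le_trans hmem_a.1 hs₁.1.le, le_trans hs₁.2.le hmem_b'.2⟩
    have hstrict := hkey_lt s₁ hs₁01 hle hs₁c
    rw [(hder s₁).deriv] at hd0
    linarith
end
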